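/- arXiv:2406.18188 — 2 statements merged into one kernel-verified Lean document; each statement's English description precedes it below -/
import Mathlib

section
/- Let N = p₁^{α₁}···p_r^{α_r} be the prime factorization of N ≥ 2, let k be an integer, let l_i be the size of the k-monomial minimal solution modulo p_i^{α_i}, and let l be the size of the k̄-monomial minimal solution modulo N. Then l = lcm(l₁,...,l_r) or l = 2·lcm(l₁,...,l_r). -/
def matE {N : ℕ} (a : ZMod N) : Matrix (Fin 2) (Fin 2) (ZMod N) := !![a, -1; 1, 0]

/-- `M_m(k,…,k) = ±Id` over `ℤ/Nℤ` (constant tuple, so a matrix power). -/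
def isMonSol {N : ℕ} (k : ZMod N) (m : ℕ) : Prop :=
  matE k ^ m = 1 ∨ matE k ^ m = -1

/-- `r` is the size of the `k`-monomial minimal solution modulo `N`. -/
def minMonSize {N : ℕ} (k : ZMod N) (r : ℕ) : Prop :=
  0 < r ∧ isMonSol k r ∧ ∀ m, 0 < m → isMonSol k m → r ≤ m

lemma sol_add {N : ℕ} {k : ZMod N} {m n : ℕ} (hm : isMonSol k m) (hn : isMonSol k n) :
    isMonSol k (m + n) := by
  unfold isMonSol at *
  rcases hm with h | h <;> rcases hn with h' | h' <;>
    simp [pow_add, h, h']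

lemma sol_mul {N : ℕ} {k : ZMod N} {m : ℕ} (c : ℕ) (hm : isMonSol k m) :
    isMonSol k (c * m) := by
  induction c with
  | zero => left; simp
  | succ c ih =>
    have := sol_add ih hm
    rwa [show (c + 1) * m = c * m + m by ring]

lemma sol_sub {N : ℕ} {k : ZMod N} {m n : ℕ} (h : m ≤ n) (hm : isMonSol k m)
    (hn : isMonSol k n) : isMonSol k (n - m) := by
  have key : matE k ^ n = matE k ^ m * matE k ^ (n - m) := by
    rw [← pow_add, Nat.add_sub_cancel' h]
  unfold isMonSol at *
  rcases hm with h1 | h1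
  · rw [h1, one_mul] at key
    rcases hn with h2 | h2
    · left; rw [← key, h2]
    · right; rw [← key, h2]
  · rw [h1, neg_one_mul] at key
    rcases hn with h2 | h2
    · right
      have : matE k ^ (n - m) = -(matE k ^ n) := by rw [key, neg_neg]
      rw [this, h2]
    · left
      have : matE k ^ (n - m) = -(matE k ^ n) := by rw [key, neg_neg]
      rw [this, h2, neg_neg]

lemma min_dvd {N : ℕ} {k : ZMod N} {l : ℕ} (hl : minMonSize k l) :
    ∀ m, isMonSol k m → l ∣ m := by
  intro m
  induction m using Nat.strong_induction_on with
  | _ m ih =>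
    intro hm
    rcases Nat.eq_zero_or_pos m with rfl | hm0
    · exact dvd_zero l
    · have hle : l ≤ m := hl.2.2 m hm0 hm
      have hsub : isMonSol k (m - l) := sol_sub hle hl.2.1 hm
      have hl0 : 0 < l := hl.1
      have hd : l ∣ m - l := ih (m - l) (by omega) hsub
      have := Nat.dvd_add hd (dvd_refl l)
      rwa [Nat.sub_add_cancel hle] at this

lemma matE_map {N M : ℕ} (f : ZMod N →+* ZMod M) (a : ZMod N) :
    f.mapMatrix (matE a) = matE (f a) := by
  ext i j
  fin_cases i <;> fin_cases j <;>
    simp [matE, RingHom.mapMatrix_apply, Matrix.map_apply]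

lemma sol_map {N M : ℕ} (h : M ∣ N) (k : ℤ) {m : ℕ}
    (hs : isMonSol ((k : ZMod N)) m) : isMonSol ((k : ZMod M)) m := by
  let f : ZMod N →+* ZMod M := ZMod.castHom h (ZMod M)
  have hmap : f.mapMatrix (matE (k : ZMod N)) = matE ((k : ZMod M)) := by
    rw [matE_map, map_intCast]
  rcases hs with hs | hs
  · left
    have := congrArg f.mapMatrix hs
    rwa [map_pow, hmap, map_one] at this
  · right
    have := congrArg f.mapMatrix hs
    rwa [map_pow, hmap, map_neg, map_one] at this

theorem stmt8 (N : ℕ) (hN : 2 ≤ N) (r : ℕ) (p α : Fin r → ℕ)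
    (hp : ∀ i, (p i).Prime) (hdist : ∀ i j, i ≠ j → p i ≠ p j)
    (hα : ∀ i, 1 ≤ α i) (hfac : N = ∏ i, p i ^ α i)
    (k : ℤ) (li : Fin r → ℕ)
    (hli : ∀ i, minMonSize (k : ZMod (p i ^ α i)) (li i))
    (l : ℕ) (hl : minMonSize (k : ZMod N) l) :
    l = Finset.univ.lcm li ∨ l = 2 * Finset.univ.lcm li := by
  classical
  have hN0 : NeZero N := ⟨by omega⟩
  set L := Finset.univ.lcm li with hL
  have hdvd : ∀ i, p i ^ α i ∣ N := fun i =>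
    hfac ▸ Finset.dvd_prod_of_mem _ (Finset.mem_univ i)
  have h1 : ∀ i, li i ∣ l := fun i => min_dvd (hli i) l (sol_map (hdvd i) k hl.2.1)
  have hLl : L ∣ l := Finset.lcm_dvd (fun i _ => h1 i)
  have hL0 : L ≠ 0 := by
    intro h
    rw [h] at hLl
    have := Nat.eq_zero_of_zero_dvd hLl
    have := hl.1
    omega
  -- the image of matE k ^ (2L) mod each prime power is 1
  have hfact : ∀ i, (ZMod.castHom (hdvd i) (ZMod (p i ^ α i))).mapMatrix
      (matE (k : ZMod N) ^ (2 * L)) = 1 := by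
    intro i
    have hLi : isMonSol (k : ZMod (p i ^ α i)) L := by
      obtain ⟨c, hc⟩ := Finset.dvd_lcm (f := li) (Finset.mem_univ i)
      rw [← hL] at hc
      rw [hc, mul_comm]
      exact sol_mul c (hli i).2.1
    have hone : matE (k : ZMod (p i ^ α i)) ^ (2 * L) = 1 := by
      rcases hLi with h | h <;> rw [mul_comm, pow_mul, h] <;> simp
    rw [map_pow, matE_map, map_intCast, hone]
  -- CRT: an element of ZMod N vanishing mod each prime power is 0
  have hzero : ∀ x : ZMod N,
      (∀ i, ZMod.castHom (hdvd i) (ZMod (p i ^ α i)) x = 0) → x = 0 := by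
    intro x hx
    have hdvdv : ∀ i, ((p i ^ α i : ℕ) : ℤ) ∣ (x.val : ℤ) := by
      intro i
      have hxcast : ((x.val : ℕ) : ZMod (p i ^ α i)) = 0 := by
        rw [ZMod.natCast_val, ← ZMod.castHom_apply (h := hdvd i), hx i]
      exact_mod_cast (ZMod.natCast_eq_zero_iff _ _).mp hxcast
    have hcop : Set.Pairwise ↑(Finset.univ : Finset (Fin r))
        (Function.onFun IsCoprime (fun i => ((p i ^ α i : ℕ) : ℤ))) := by
      intro i _ j _ hij
      have hc : Nat.Coprime (p i ^ α i) (p j ^ α j) :=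
        Nat.Coprime.pow _ _ ((Nat.coprime_primes (hp i) (hp j)).mpr (hdist i j hij))
      exact Nat.isCoprime_iff_coprime.mpr hc
    have hprod : (∏ i, ((p i ^ α i : ℕ) : ℤ)) ∣ (x.val : ℤ) :=
      Finset.prod_dvd_of_coprime hcop (fun i _ => hdvdv i)
    have hNdvd : (N : ℤ) ∣ (x.val : ℤ) := by
      have hcast : ((N : ℕ) : ℤ) = ∏ i, ((p i ^ α i : ℕ) : ℤ) := by
        rw [hfac]; push_cast; ring
      rw [hcast]
      exact hprod
    have hNdvd' : N ∣ x.val := Int.natCast_dvd_natCast.mp hNdvd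
    have hlt : x.val < N := ZMod.val_lt x
    have : x.val = 0 := Nat.eq_zero_of_dvd_of_lt hNdvd' |> fun h => by
      rcases Nat.eq_zero_or_pos x.val with h0 | h0
      · exact h0
      · exact absurd hlt (not_lt.mpr (Nat.le_of_dvd h0 hNdvd'))
    exact (ZMod.val_eq_zero x).mp this
  have hsol2L : matE (k : ZMod N) ^ (2 * L) = 1 := by
    have hY : matE (k : ZMod N) ^ (2 * L) - 1 = 0 := by
      ext a b
      have hent : ∀ i, ZMod.castHom (hdvd i) (ZMod (p i ^ α i))
          ((matE (k : ZMod N) ^ (2 * L) - 1) a b) = 0 := by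
        intro i
        have h2 : (ZMod.castHom (hdvd i) (ZMod (p i ^ α i))).mapMatrix
            (matE (k : ZMod N) ^ (2 * L) - 1) = 0 := by
          rw [map_sub, hfact i, map_one, sub_self]
        have h3 := congrFun (congrFun h2 a) b
        simpa [RingHom.mapMatrix_apply, Matrix.map_apply] using h3
      simpa using hzero _ hent
    exact sub_eq_zero.mp hY
  have hl2L : l ∣ 2 * L := min_dvd hl _ (Or.inl hsol2L)
  obtain ⟨d, hd⟩ := hLl
  have hd2 : d ∣ 2 := by
    have : L * d ∣ L * 2 := by rw [← hd, mul_comm L 2]; exact hl2L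
    exact (Nat.mul_dvd_mul_iff_left (Nat.pos_of_ne_zero hL0)).mp this
  rcases (Nat.dvd_prime Nat.prime_two).mp hd2 with rfl | rfl
  · left; rw [hd, mul_one]
  · right; rw [hd, mul_comm]
end

section
/- Let N = 2u with u ≥ 3 odd, and let k be an integer. Let l₁ be the size of the k-monomial minimal solution modulo 2, h the size modulo u, and l the size modulo N. Then l = lcm(l₁, h). Moreover, if k is even then l ≤ N, and if k is odd then l ≤ 3N. -/
def Eg {R : Type*} [CommRing R] (a : R) : Matrix (Fin 2) (Fin 2) R := !![a, -1; 1, 0]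

lemma map_Eg {R S : Type*} [CommRing R] [CommRing S] (φ : R →+* S) (a : R) :
    φ.mapMatrix (Eg a) = Eg (φ a) := by
  ext i j
  fin_cases i <;> fin_cases j <;> simp [Eg, RingHom.mapMatrix_apply]

lemma one_add_sq_zero_pow {R : Type*} [Ring R] {c : R} (h : c * c = 0) (n : ℕ) :
    (1 + c) ^ n = 1 + n • c := by
  induction n with
  | zero => simp
  | succ n ih =>
    have hc : (n • c) * c = 0 := by rw [smul_mul_assoc, h, smul_zero]
    rw [pow_succ, ih]
    simp only [add_mul, mul_add, mul_one, one_mul, hc, add_zero, succ_nsmul]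
    abel

lemma conj_pow_mat {K : Type*} [CommRing K] (P D : Matrix (Fin 2) (Fin 2) K)
    (hP : IsUnit P.det) (m : ℕ) : (P * D * P⁻¹) ^ m = P * D ^ m * P⁻¹ := by
  induction m with
  | zero => simp [Matrix.mul_nonsing_inv P hP]
  | succ n ih =>
    have hstep : P⁻¹ * (P * D * P⁻¹) = D * P⁻¹ := by
      rw [← Matrix.mul_assoc, ← Matrix.mul_assoc, Matrix.nonsing_inv_mul P hP, Matrix.one_mul]
    rw [pow_succ, ih, pow_succ, Matrix.mul_assoc (P * D ^ n) P⁻¹ _, hstep,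
      ← Matrix.mul_assoc, Matrix.mul_assoc P (D ^ n) D]

lemma Eg_pow_eq_one_of_roots {K : Type*} [Field K] {a lam mu : K} (m : ℕ)
    (hsum : lam + mu = a) (hprod : lam * mu = 1) (hne : lam ≠ mu)
    (h1 : lam ^ m = 1) (h2 : mu ^ m = 1) : Eg a ^ m = 1 := by
  set P : Matrix (Fin 2) (Fin 2) K := !![lam, mu; 1, 1] with hPdef
  have hdet : P.det = lam - mu := by simp [hPdef, Matrix.det_fin_two_of]
  have hP : IsUnit P.det := by
    rw [hdet]; exact (sub_ne_zero.mpr hne).isUnit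
  have hD : Eg a * P = P * Matrix.diagonal ![lam, mu] := by
    ext i j
    fin_cases i <;> fin_cases j <;>
      simp [Eg, hPdef, Matrix.mul_apply, Matrix.diagonal, Fin.sum_univ_two] <;>
      first
        | linear_combination (-lam) * hsum + hprod
        | linear_combination (-mu) * hsum + hprod
  have hA : Eg a = P * Matrix.diagonal ![lam, mu] * P⁻¹ := by
    rw [← hD, Matrix.mul_assoc, Matrix.mul_nonsing_inv P hP, Matrix.mul_one]
  have hDm : (Matrix.diagonal ![lam, mu]) ^ m = 1 := by
    rw [Matrix.diagonal_pow]
    have : (![lam, mu] ^ m) = 1 := by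
      funext i
      fin_cases i <;> simp [Pi.pow_apply, h1, h2]
    rw [this]; exact Matrix.diagonal_one
  rw [hA, conj_pow_mat P _ hP, hDm, Matrix.mul_one, Matrix.mul_nonsing_inv P hP]

-- every residue is a square in GF(p^2)
lemma isSquare_gf (p : ℕ) [Fact p.Prime] (hp2 : p ≠ 2) (b : ZMod p) :
    IsSquare (algebraMap (ZMod p) (GaloisField p 2) b) := by
  by_cases hb : b = 0
  · subst hb; simp
  set K := GaloisField p 2
  letI : Fintype K := Fintype.ofFinite K
  have hchar : ringChar K ≠ 2 := by
    have : CharP K p := inferInstance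
    rw [ringChar.eq K p]; exact hp2
  have hne : algebraMap (ZMod p) K b ≠ 0 := by
    simpa using (map_ne_zero_iff _ (algebraMap (ZMod p) K).injective).mpr hb
  rw [FiniteField.isSquare_iff hchar hne]
  obtain ⟨r, hr⟩ := (Fact.out : p.Prime).odd_of_ne_two hp2
  have hcard : Fintype.card K = p ^ 2 := by
    rw [← Nat.card_eq_fintype_card]; exact GaloisField.card p 2 (by norm_num)
  have hdiv : Fintype.card K / 2 = (p - 1) * (r + 1) := by
    rw [hcard]
    have hp1 : p - 1 = 2 * r := by omega
    have h1 : p ^ 2 = 2 * ((p - 1) * (r + 1)) + 1 := by rw [hp1, hr]; ring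
    omega
  rw [hdiv, pow_mul, ← map_pow, ZMod.pow_card_sub_one_eq_one hb, map_one, one_pow]

lemma Eg_sq {R : Type*} [CommRing R] (a : R) : Eg a ^ 2 = a • Eg a - 1 := by
  ext i j
  rw [pow_two]
  fin_cases i <;> fin_cases j <;> simp [Eg, Matrix.mul_apply, Fin.sum_univ_two] <;> ring

/-- the unipotent case -/
lemma unipotent_pow {p : ℕ} [Fact p.Prime] {a : ZMod p} (ha : a = 2 ∨ a = -2) :
    Eg a ^ (2 * p) = 1 := by
  have key : ∃ c : Matrix (Fin 2) (Fin 2) (ZMod p), c * c = 0 ∧ Eg a ^ 2 = 1 + c := by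
    rcases ha with rfl | rfl
    · refine ⟨!![(2 : ZMod p), -2; 2, -2], ?_, ?_⟩
      · ext i j
        fin_cases i <;> fin_cases j <;> simp [Matrix.mul_apply, Fin.sum_univ_two] <;> ring
      · rw [pow_two]
        ext i j
        fin_cases i <;> fin_cases j <;> simp [Eg, Matrix.mul_apply, Fin.sum_univ_two] <;> ring
    · refine ⟨!![(2 : ZMod p), 2; -2, -2], ?_, ?_⟩
      · ext i j
        fin_cases i <;> fin_cases j <;> simp [Matrix.mul_apply, Fin.sum_univ_two] <;> ring
      · rw [pow_two]
        ext i j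
        fin_cases i <;> fin_cases j <;> simp [Eg, Matrix.mul_apply, Fin.sum_univ_two] <;> ring
  obtain ⟨c, hc, hsq⟩ := key
  have hpc : p • c = 0 := by
    ext i j
    simp [nsmul_eq_mul]
  rw [pow_mul, hsq, one_add_sq_zero_pow hc, hpc, add_zero]


lemma mapMatrix_inj {R S : Type*} [CommRing R] [CommRing S] (φ : R →+* S)
    (hφ : Function.Injective φ) {M N : Matrix (Fin 2) (Fin 2) R}
    (h : φ.mapMatrix M = φ.mapMatrix N) : M = N := by
  ext i j
  apply hφ
  have h' := Matrix.ext_iff.mpr h i j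
  simpa [RingHom.mapMatrix_apply, Matrix.map_apply] using h'

/-- prime case: some `s ≤ p` with `Eg a ^ (2s) = 1`. -/
lemma prime_case (p : ℕ) [Fact p.Prime] (hp2 : p ≠ 2) (a : ZMod p) :
    ∃ s : ℕ, 0 < s ∧ s ≤ p ∧ Eg a ^ (2 * s) = 1 := by
  have hp := (Fact.out : p.Prime)
  by_cases h4 : a = 2 ∨ a = -2
  · exact ⟨p, hp.pos, le_refl p, unipotent_pow h4⟩
  push_neg at h4
  have hd0 : a * a - 4 ≠ 0 := by
    intro hzero
    have : (a - 2) * (a + 2) = 0 := by linear_combination hzero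
    rcases mul_eq_zero.mp this with h | h
    · exact h4.1 (by linear_combination h)
    · exact h4.2 (by linear_combination h)
  set K := GaloisField p 2 with hK
  letI : Fintype K := Fintype.ofFinite K
  set ι := algebraMap (ZMod p) K with hι
  have hinj : Function.Injective ι := (algebraMap (ZMod p) K).injective
  set κ := ι a with hκ
  obtain ⟨d, hd⟩ : IsSquare (κ * κ - 4) := by
    have h1 : κ * κ - 4 = ι (a * a - 4) := by rw [map_sub, map_mul, map_ofNat]
    rw [h1]; exact isSquare_gf p hp2 _
  have hdne : d ≠ 0 := by
    rintro rfl
    rw [mul_zero] at hd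
    apply hd0
    apply hinj
    rw [map_sub, map_mul, map_ofNat, map_zero, ← hκ, hd]
  have h2K : (2 : K) ≠ 0 := by
    intro h2
    have h2' : ((2 : ℕ) : K) = 0 := by exact_mod_cast h2
    have hdvd := (CharP.cast_eq_zero_iff K p 2).mp h2'
    have := Nat.le_of_dvd (by norm_num) hdvd
    have := hp.two_le
    omega
  obtain ⟨t, ht⟩ : ∃ t : K, 2 * t = 1 := ⟨2⁻¹, mul_inv_cancel₀ h2K⟩
  obtain ⟨lam, hlam⟩ : ∃ x : K, x = (κ + d) * t := ⟨_, rfl⟩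
  obtain ⟨mu, hmu⟩ : ∃ x : K, x = (κ - d) * t := ⟨_, rfl⟩
  have hsum : lam + mu = κ := by rw [hlam, hmu]; linear_combination κ * ht
  have hprod : lam * mu = 1 := by
    rw [hlam, hmu]; linear_combination t^2 * hd + (2*t + 1) * ht
  have hdiff : lam - mu = d := by rw [hlam, hmu]; linear_combination d * ht
  have hne : lam ≠ mu := fun h => hdne (by rw [← hdiff, h, sub_self])
  have hlne : lam ≠ 0 := left_ne_zero_of_mul_eq_one hprod
  have hroot : lam * lam - κ * lam + 1 = 0 := by linear_combination lam * hsum - hprod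
  have hfrob : lam ^ p * lam ^ p - κ * lam ^ p + 1 = 0 := by
    have hc := congrArg (frobenius K p) hroot
    simp only [map_add, map_sub, map_mul, map_one, map_zero, frobenius_def] at hc
    have hκp : κ ^ p = κ := by rw [hκ, ← map_pow, ZMod.pow_card]
    rw [hκp] at hc
    exact hc
  have hfactor : (lam ^ p - lam) * (lam ^ p - mu) = 0 := by
    linear_combination hfrob - lam ^ p * hsum + hprod
  obtain ⟨r, hr⟩ := hp.odd_of_ne_two hp2
  have hp3 : 1 ≤ r := by have := hp.two_le; omega
  have main : ∃ s : ℕ, 0 < s ∧ s ≤ p ∧ lam ^ (2 * s) = 1 := by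
    rcases mul_eq_zero.mp hfactor with hcase | hcase
    · have hlp : lam ^ p = lam := by linear_combination hcase
      refine ⟨r, hp3, by omega, ?_⟩
      have hstep : lam ^ (2 * r) * lam = 1 * lam := by
        rw [one_mul, ← pow_succ]
        have h1 : 2 * r + 1 = p := by omega
        rw [h1, hlp]
      exact mul_right_cancel₀ hlne hstep
    · have hlp : lam ^ p = mu := by linear_combination hcase
      refine ⟨r + 1, by omega, by omega, ?_⟩
      have h1 : 2 * (r + 1) = p + 1 := by omega
      rw [h1, pow_succ, hlp]
      linear_combination hprod
  obtain ⟨s, hs0, hsp, hm⟩ := main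
  have hmus : mu ^ (2 * s) = 1 := by
    have hx : lam ^ (2*s) * mu ^ (2*s) = 1 := by rw [← mul_pow, hprod, one_pow]
    rw [hm, one_mul] at hx
    exact hx
  refine ⟨s, hs0, hsp, ?_⟩
  apply mapMatrix_inj ι hinj
  rw [map_pow, map_Eg, map_one, ← hκ]
  exact Eg_pow_eq_one_of_roots (2 * s) hsum hprod hne hm hmus

lemma lift_pow_one {p : ℕ} (hp : p.Prime) (e : ℕ) (he : 1 ≤ e) (k : ℤ) (m : ℕ)
    (h : Eg ((k : ZMod (p^e))) ^ m = 1) :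
    Eg ((k : ZMod (p^(e+1)))) ^ (m * p) = 1 := by
  have hdvd : p ^ e ∣ p ^ (e+1) := pow_dvd_pow p (by omega)
  set φ : ZMod (p^(e+1)) →+* ZMod (p^e) := ZMod.castHom hdvd _ with hφ
  set B := Eg ((k : ZMod (p^(e+1)))) ^ m with hB
  set C := B - 1 with hC
  have hmap : φ.mapMatrix B = 1 := by
    rw [hB, map_pow, map_Eg, map_intCast, h]
  have hent : ∀ i j, ∃ c : ℕ, p ^ e ∣ c ∧ C i j = (c : ZMod (p^(e+1))) := by
    intro i j
    haveI : NeZero (p ^ (e+1)) := ⟨pow_ne_zero _ hp.pos.ne'⟩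
    refine ⟨(C i j).val, ?_, (ZMod.natCast_rightInverse (C i j)).symm⟩
    have h0 : φ (C i j) = 0 := by
      have hmat : φ.mapMatrix C = 0 := by rw [hC, map_sub, hmap, map_one, sub_self]
      have := Matrix.ext_iff.mpr hmat i j
      simpa [RingHom.mapMatrix_apply, Matrix.map_apply] using this
    rw [← (ZMod.natCast_rightInverse (C i j) : (((C i j).val : ℕ) : ZMod (p^(e+1))) = C i j),
      map_natCast] at h0
    exact (ZMod.natCast_eq_zero_iff _ _).mp h0
  have hCC : C * C = 0 := by
    ext i j
    rw [Matrix.mul_apply]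
    have hterm : ∀ x, C i x * C x j = 0 := by
      intro x
      obtain ⟨c, hc, hcx⟩ := hent i x
      obtain ⟨c', hc', hcx'⟩ := hent x j
      rw [hcx, hcx', ← Nat.cast_mul]
      apply (ZMod.natCast_eq_zero_iff _ _).mpr
      have h1 : p^(e+1) ∣ p^e * p^e := by rw [← pow_add]; exact pow_dvd_pow p (by omega)
      exact h1.trans (mul_dvd_mul hc hc')
    simp [hterm]
  have hpC : p • C = 0 := by
    ext i j
    obtain ⟨c, hc, hcx⟩ := hent i j
    have hz : ((p * c : ℕ) : ZMod (p^(e+1))) = 0 := by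
      apply (ZMod.natCast_eq_zero_iff _ _).mpr
      obtain ⟨w, rfl⟩ := hc
      exact ⟨w, by ring⟩
    rw [Matrix.smul_apply, hcx, nsmul_eq_mul, ← Nat.cast_mul, hz, Matrix.zero_apply]
  have hBp : B ^ p = 1 := by
    have h1 : B = 1 + C := by rw [hC]; abel
    rw [h1, one_add_sq_zero_pow hCC, hpC, add_zero]
  rw [pow_mul]
  exact hBp

lemma prime_case' (p n : ℕ) [Fact p.Prime] (hp2 : p ≠ 2) (hn : n = p) (k : ℤ) :
    ∃ s : ℕ, 0 < s ∧ s ≤ n ∧ Eg ((k : ZMod n)) ^ (2 * s) = 1 := by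
  subst hn
  exact prime_case _ hp2 _

lemma prime_pow_case (p : ℕ) (hp : p.Prime) (hp2 : p ≠ 2) (k : ℤ) (e : ℕ) :
    ∃ s : ℕ, 0 < s ∧ s ≤ p ^ (e + 1) ∧ Eg ((k : ZMod (p ^ (e + 1)))) ^ (2 * s) = 1 := by
  induction e with
  | zero =>
    haveI : Fact p.Prime := ⟨hp⟩
    have hq : p ^ (0 + 1) = p := by ring
    exact prime_case' p (p ^ (0+1)) hp2 hq k
  | succ e ih =>
    obtain ⟨s, hs0, hsle, hpow⟩ := ih
    refine ⟨s * p, Nat.mul_pos hs0 hp.pos, ?_, ?_⟩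
    · calc s * p ≤ p ^ (e+1) * p := Nat.mul_le_mul_right p hsle
        _ = p ^ (e+2) := by ring
    · have hl := lift_pow_one hp (e+1) (by omega) k (2 * s) hpow
      have h2 : 2 * (s * p) = 2 * s * p := by ring
      rw [h2]
      exact hl

lemma crt_mat_one {a b : ℕ} (ha : 0 < a) (hb : 0 < b) (hco : a.Coprime b)
    (M : Matrix (Fin 2) (Fin 2) (ZMod (a * b)))
    (hMa : (ZMod.castHom (dvd_mul_right a b) (ZMod a)).mapMatrix M = 1)
    (hMb : (ZMod.castHom (dvd_mul_left b a) (ZMod b)).mapMatrix M = 1) : M = 1 := by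
  haveI : NeZero (a * b) := ⟨Nat.mul_ne_zero ha.ne' hb.ne'⟩
  have hD : M - 1 = 0 := by
    ext i j
    set d := (M - 1) i j with hd
    have hval : ((d.val : ℕ) : ZMod (a * b)) = d := ZMod.natCast_rightInverse d
    have hza : a ∣ d.val := by
      have hmat : (ZMod.castHom (dvd_mul_right a b) (ZMod a)).mapMatrix (M - 1) = 0 := by
        rw [map_sub, hMa, map_one, sub_self]
      have h0 := Matrix.ext_iff.mpr hmat i j
      simp only [RingHom.mapMatrix_apply, Matrix.map_apply, Matrix.zero_apply] at h0
      rw [← hd] at h0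
      rw [← hval, map_natCast] at h0
      exact (ZMod.natCast_eq_zero_iff _ _).mp h0
    have hzb : b ∣ d.val := by
      have hmat : (ZMod.castHom (dvd_mul_left b a) (ZMod b)).mapMatrix (M - 1) = 0 := by
        rw [map_sub, hMb, map_one, sub_self]
      have h0 := Matrix.ext_iff.mpr hmat i j
      simp only [RingHom.mapMatrix_apply, Matrix.map_apply, Matrix.zero_apply] at h0
      rw [← hd] at h0
      rw [← hval, map_natCast] at h0
      exact (ZMod.natCast_eq_zero_iff _ _).mp h0
    have hab : a * b ∣ d.val := hco.mul_dvd_of_dvd_of_dvd hza hzb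
    have : ((d.val : ℕ) : ZMod (a * b)) = 0 := (ZMod.natCast_eq_zero_iff _ _).mpr hab
    rw [hval] at this
    rw [← hd] at *
    simpa using this
  have := sub_eq_zero.mp hD
  exact this

/-- Global: for odd `u` there is `S ≤ u` with `Eg k ^ (2S) = 1` mod `u`. -/
lemma key_lemma (k : ℤ) : ∀ u : ℕ, Odd u →
    ∃ S : ℕ, 0 < S ∧ S ≤ u ∧ Eg ((k : ZMod u)) ^ (2 * S) = 1 := by
  intro u
  induction u using Nat.recOnPosPrimePosCoprime with
  | prime_pow p n hp hn =>
    intro hodd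
    have hp2 : p ≠ 2 := by
      rintro rfl
      rw [Nat.odd_iff] at hodd
      have : (2:ℕ) ∣ 2 ^ n := dvd_pow_self 2 hn.ne'
      omega
    obtain ⟨e, rfl⟩ : ∃ e, n = e + 1 := ⟨n - 1, by omega⟩
    exact prime_pow_case p hp hp2 k e
  | zero => intro hodd; rw [Nat.odd_iff] at hodd; omega
  | one =>
    intro _
    exact ⟨1, one_pos, le_refl 1, Subsingleton.elim _ _⟩
  | coprime a b ha hb hco iha ihb =>
    intro hodd
    rw [Nat.odd_mul] at hodd
    obtain ⟨Sa, hSa0, hSale, hSapow⟩ := iha hodd.1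
    obtain ⟨Sb, hSb0, hSble, hSbpow⟩ := ihb hodd.2
    refine ⟨Sa * Sb, Nat.mul_pos hSa0 hSb0, Nat.mul_le_mul hSale hSble, ?_⟩
    apply crt_mat_one (by omega) (by omega) hco
    · rw [map_pow, map_Eg, map_intCast]
      have h1 : 2 * (Sa * Sb) = 2 * Sa * Sb := by ring
      rw [h1, pow_mul, hSapow, one_pow]
    · rw [map_pow, map_Eg, map_intCast]
      have h1 : 2 * (Sa * Sb) = 2 * Sb * Sa := by ring
      rw [h1, pow_mul, hSbpow, one_pow]

lemma matE_eq {N : ℕ} (a : ZMod N) : matE a = Eg a := rfl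

lemma pm_mul {R : Type*} [Monoid R] [HasDistribNeg R] {x y : R}
    (hx : x = 1 ∨ x = -1) (hy : y = 1 ∨ y = -1) : x * y = 1 ∨ x * y = -1 := by
  rcases hx with rfl | rfl <;> rcases hy with rfl | rfl <;> simp

lemma pm_pow {R : Type*} [Monoid R] [HasDistribNeg R] {x : R}
    (hx : x = 1 ∨ x = -1) (n : ℕ) : x ^ n = 1 ∨ x ^ n = -1 := by
  rcases hx with rfl | rfl
  · left; exact one_pow n
  · exact neg_one_pow_eq_or R n

lemma isMonSol_mul {N : ℕ} (k : ZMod N) {r : ℕ} (hr : isMonSol k r) (n : ℕ) :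
    isMonSol k (r * n) := by
  unfold isMonSol at *
  rw [pow_mul]
  exact pm_pow hr n

lemma minMonSize_dvd {N : ℕ} {k : ZMod N} {r : ℕ} (hr : minMonSize k r) {m : ℕ}
    (hm : isMonSol k m) : r ∣ m := by
  obtain ⟨hr0, hrsol, hmin⟩ := hr
  have hqs : r * (m / r) + m % r = m := Nat.div_add_mod m r
  have hX : matE k ^ (r * (m / r)) = 1 ∨ matE k ^ (r * (m / r)) = -1 := by
    rw [pow_mul]; exact pm_pow hrsol _
  have hXX : matE k ^ (r * (m / r)) * matE k ^ (r * (m / r)) = 1 := by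
    rcases hX with hh | hh <;> rw [hh] <;> simp
  have hm' : matE k ^ m = matE k ^ (r * (m / r)) * matE k ^ (m % r) := by
    conv_lhs => rw [← hqs]
    rw [pow_add]
  have hAs : matE k ^ (m % r) = matE k ^ (r * (m / r)) * matE k ^ m := by
    rw [hm', ← mul_assoc, hXX, one_mul]
  have hsol : isMonSol k (m % r) := by
    unfold isMonSol
    rw [hAs]
    exact pm_mul hX hm
  by_cases hs : m % r = 0
  · exact Nat.dvd_of_mod_eq_zero hs
  · have h1 := hmin _ (Nat.pos_of_ne_zero hs) hsol
    have h2 : m % r < r := Nat.mod_lt m hr0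
    omega

lemma isMonSol_transfer {d n : ℕ} (hdn : d ∣ n) (k : ℤ) {m : ℕ}
    (h : isMonSol ((k : ZMod n)) m) : isMonSol ((k : ZMod d)) m := by
  have hcast : (ZMod.castHom hdn (ZMod d)).mapMatrix (matE ((k : ZMod n)) ^ m)
      = matE ((k : ZMod d)) ^ m := by
    simp only [matE_eq, map_pow, map_Eg, map_intCast]
  rcases h with h | h
  · left
    rw [← hcast, h, map_one]
  · right
    rw [← hcast, h, map_neg, map_one]

lemma neg_eq_self_mod_two (M : Matrix (Fin 2) (Fin 2) (ZMod 2)) : -M = M := by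
  ext i j
  rw [Matrix.neg_apply]
  exact CharTwo.neg_eq _

lemma isMonSol_combine {u : ℕ} (hodd : Odd u) (hupos : 0 < u) (k : ℤ) {m : ℕ}
    (h2 : isMonSol ((k : ZMod 2)) m) (hu : isMonSol ((k : ZMod u)) m) :
    isMonSol ((k : ZMod (2 * u))) m := by
  have hco : Nat.Coprime 2 u :=
    (Nat.prime_two.coprime_iff_not_dvd).mpr (by rw [Nat.two_dvd_ne_zero]; exact Nat.odd_iff.mp hodd)
  have hcast2 : (ZMod.castHom (dvd_mul_right 2 u) (ZMod 2)).mapMatrix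
      (matE ((k : ZMod (2*u))) ^ m) = matE ((k : ZMod 2)) ^ m := by
    simp only [matE_eq, map_pow, map_Eg, map_intCast]
  have hcastu : (ZMod.castHom (dvd_mul_left u 2) (ZMod u)).mapMatrix
      (matE ((k : ZMod (2*u))) ^ m) = matE ((k : ZMod u)) ^ m := by
    simp only [matE_eq, map_pow, map_Eg, map_intCast]
  have h2' : matE ((k : ZMod 2)) ^ m = 1 := by
    rcases h2 with hh | hh
    · exact hh
    · rw [hh]; exact neg_eq_self_mod_two 1
  rcases hu with hh | hh
  · left
    apply crt_mat_one two_pos hupos hco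
    · rw [hcast2, h2']
    · rw [hcastu, hh]
  · right
    rw [← neg_eq_iff_eq_neg]
    apply crt_mat_one two_pos hupos hco
    · rw [map_neg, hcast2, h2']
      exact neg_eq_self_mod_two 1
    · rw [map_neg, hcastu, hh, neg_neg]

theorem stmt10 (u : ℕ) (hu : 3 ≤ u) (hodd : Odd u) (k : ℤ)
    (l₁ h l : ℕ)
    (hl₁ : minMonSize (k : ZMod 2) l₁)
    (hh : minMonSize (k : ZMod u) h)
    (hl : minMonSize (k : ZMod (2 * u)) l) :
    l = Nat.lcm l₁ h ∧ (Even k → l ≤ 2 * u) ∧ (Odd k → l ≤ 3 * (2 * u)) := by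
  have h2l : l₁ ∣ l := minMonSize_dvd hl₁ (isMonSol_transfer ⟨u, rfl⟩ k hl.2.1)
  have hul : h ∣ l := minMonSize_dvd hh (isMonSol_transfer ⟨2, mul_comm 2 u⟩ k hl.2.1)
  have hlcm_dvd_l : Nat.lcm l₁ h ∣ l := Nat.lcm_dvd h2l hul
  have hlcm_pos : 0 < Nat.lcm l₁ h := Nat.lcm_pos hl₁.1 hh.1
  obtain ⟨c1, hc1⟩ := Nat.dvd_lcm_left l₁ h
  obtain ⟨c2, hc2⟩ := Nat.dvd_lcm_right l₁ h
  have hs2 : isMonSol (k : ZMod 2) (Nat.lcm l₁ h) := hc1 ▸ isMonSol_mul _ hl₁.2.1 c1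
  have hsu : isMonSol (k : ZMod u) (Nat.lcm l₁ h) := hc2 ▸ isMonSol_mul _ hh.2.1 c2
  have hslcm : isMonSol (k : ZMod (2*u)) (Nat.lcm l₁ h) :=
    isMonSol_combine hodd (by omega) k hs2 hsu
  have heq : l = Nat.lcm l₁ h :=
    le_antisymm (hl.2.2 _ hlcm_pos hslcm) (Nat.le_of_dvd hl.1 hlcm_dvd_l)
  obtain ⟨S, hS0, hSu, hSpow⟩ := key_lemma k u hodd
  have hSsol : isMonSol (k : ZMod u) (2 * S) := Or.inl hSpow
  have hh2S : h ∣ 2 * S := minMonSize_dvd hh hSsol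
  refine ⟨heq, ?_, ?_⟩
  · intro hk
    have hk0 : (k : ZMod 2) = 0 :=
      (ZMod.intCast_zmod_eq_zero_iff_dvd k 2).mpr (by exact_mod_cast hk.two_dvd)
    have hsol2 : isMonSol (k : ZMod 2) 2 := Or.inl (by rw [hk0]; decide)
    have hl12 : l₁ ∣ 2 := minMonSize_dvd hl₁ hsol2
    have hldvd : l ∣ 2 * S := heq ▸ Nat.lcm_dvd (hl12.trans ⟨S, rfl⟩) hh2S
    have := Nat.le_of_dvd (by omega) hldvd
    omega
  · intro hk
    have hk1 : (k : ZMod 2) = 1 := by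
      have h0 : (k : ZMod 2) ≠ 0 := fun hc => by
        have h2k : (2:ℤ) ∣ k := by exact_mod_cast (ZMod.intCast_zmod_eq_zero_iff_dvd k 2).mp hc
        rw [Int.odd_iff] at hk
        omega
      revert h0
      have : ∀ x : ZMod 2, x ≠ 0 → x = 1 := by decide
      exact this _
    have hsol3 : isMonSol (k : ZMod 2) 3 := Or.inl (by rw [hk1]; decide)
    have hl13 : l₁ ∣ 3 := minMonSize_dvd hl₁ hsol3
    have hldvd : l ∣ 3 * (2 * S) :=
      heq ▸ Nat.lcm_dvd (hl13.trans ⟨2*S, rfl⟩) (hh2S.trans ⟨3, by ring⟩)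
    have := Nat.le_of_dvd (by omega) hldvd
    omega
end
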